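/- arXiv:0908.0556 — 3 statements merged into one kernel-verified Lean document; each statement's English description precedes it below -/
import Mathlib

section
/- Let M be a compact metric space, let μ and μ_j (j ∈ ℕ) be finite Borel measures on M, and assume μ_j → μ weakly, i.e. ∫ f dμ_j → ∫ f dμ for every bounded continuous f : M → ℝ. Let E ⊆ M be a Borel set which is 'quasi-open with uniformly small exceptional sets' in the following sense: for every ε > 0 there exist an open set O ⊆ M and Borel sets G, G' ⊆ M with E ⊆ O ∪ G, O ⊆ E ∪ G', μ(G) ≤ ε, and μ_j(G') ≤ ε for every j. Then μ(E) ≤ liminf_{j→∞} μ_j(E). -/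
open Filter Topology MeasureTheory

/-- **Portmanteau inequality for quasi-open sets.** If finite Borel measures `μ j`
converge weakly to `μ` on a compact metric space, and `E` is quasi-open with
uniformly small exceptional sets, then `μ E ≤ liminf_j (μ j) E`. -/
theorem measure_le_liminf_of_quasiOpen {M : Type*} [MetricSpace M] [CompactSpace M]
    [MeasurableSpace M] [BorelSpace M]
    (μ : Measure M) (μs : ℕ → Measure M)
    [IsFiniteMeasure μ] [∀ j, IsFiniteMeasure (μs j)]
    (hweak : ∀ f : BoundedContinuousFunction M ℝ,
      Tendsto (fun j => ∫ x, f x ∂(μs j)) atTop (𝓝 (∫ x, f x ∂μ)))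
    (E : Set M) (hE : MeasurableSet E)
    (hquasi : ∀ ε : ℝ, 0 < ε → ∃ O G G' : Set M,
      IsOpen O ∧ MeasurableSet G ∧ MeasurableSet G' ∧
      E ⊆ O ∪ G ∧ O ⊆ E ∪ G' ∧
      μ G ≤ ENNReal.ofReal ε ∧ ∀ j, μs j G' ≤ ENNReal.ofReal ε) :
    μ E ≤ liminf (fun j => μs j E) atTop := by
  -- package the measures as `FiniteMeasure`s converging weakly
  set ν : FiniteMeasure M := ⟨μ, inferInstance⟩ with hνdef
  set νs : ℕ → FiniteMeasure M := fun j => ⟨μs j, inferInstance⟩ with hνsdef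
  have hν : Tendsto νs atTop (𝓝 ν) :=
    FiniteMeasure.tendsto_iff_forall_integral_tendsto.mpr hweak
  -- total masses converge
  have huniv : Tendsto (fun j => μs j Set.univ) atTop (𝓝 (μ Set.univ)) := by
    have h1 := hweak 1
    simp only [BoundedContinuousFunction.coe_one, Pi.one_apply, integral_const, smul_eq_mul,
      mul_one] at h1
    exact (ENNReal.tendsto_toReal_iff (fun j => measure_ne_top (μs j) _)
      (measure_ne_top μ _)).mp h1
  -- it suffices to bound up to ε
  have hliminf_fin : liminf (fun j => μs j E) atTop ≠ ⊤ := by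
    have : liminf (fun j => μs j E) atTop ≤ liminf (fun j => μs j Set.univ) atTop :=
      liminf_le_liminf (Eventually.of_forall fun j => measure_mono (Set.subset_univ _))
    rw [huniv.liminf_eq] at this
    exact (this.trans_lt (measure_lt_top μ _)).ne
  apply ENNReal.le_of_forall_pos_le_add
  intro ε hε _
  have hε3 : (0 : ℝ) < ε / 3 := by positivity
  obtain ⟨O, G, G', hO, hGm, hG'm, hEO, hOE, hμG, hμsG'⟩ := hquasi (ε / 3) hε3
  set δ : ENNReal := ENNReal.ofReal (ε / 3) with hδdef
  have hδε : δ + δ + δ = (ε : ENNReal) := by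
    rw [hδdef, ← ENNReal.ofReal_add hε3.le hε3.le, ← ENNReal.ofReal_add (by positivity) hε3.le]
    rw [show (ε : ℝ) / 3 + ε / 3 + ε / 3 = (ε : ℝ) by ring]
    simp [ENNReal.ofReal_coe_nnreal]
  -- portmanteau for the closed set Oᶜ
  have hclosed : limsup (fun j => μs j Oᶜ) atTop ≤ μ Oᶜ :=
    FiniteMeasure.limsup_measure_closed_le_of_tendsto hν hO.isClosed_compl
  have hδpos : (0 : ENNReal) < δ := ENNReal.ofReal_pos.mpr hε3
  -- eventually μs j Oᶜ ≤ μ Oᶜ + δ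
  have hev : ∀ᶠ j in atTop, μs j Oᶜ < μ Oᶜ + δ := by
    exact eventually_lt_of_limsup_lt
      (hclosed.trans_lt (ENNReal.lt_add_right (measure_ne_top μ _) hδpos.ne'))
  -- eventually μs j Set.univ - (μ Oᶜ + δ) ≤ μs j E + δ
  have hev2 : ∀ᶠ j in atTop, μs j Set.univ - (μ Oᶜ + δ) ≤ μs j E + δ := by
    filter_upwards [hev] with j hj
    have h1 : μs j Set.univ ≤ μs j O + μs j Oᶜ := by
      rw [← Set.union_compl_self O]; exact measure_union_le _ _
    have h2 : μs j O ≤ μs j E + δ :=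
      (measure_mono hOE).trans ((measure_union_le _ _).trans (add_le_add_right (hμsG' j) _))
    calc μs j Set.univ - (μ Oᶜ + δ) ≤ (μs j O + μs j Oᶜ) - (μ Oᶜ + δ) :=
          tsub_le_tsub_right h1 _
      _ ≤ μs j O := by
          apply tsub_le_iff_right.mpr
          exact add_le_add_right (hj.le.trans (by rw [add_comm])) _
      _ ≤ μs j E + δ := h2
  -- the left side tends to μ univ - (μ Oᶜ + δ)
  have htendsub : Tendsto (fun j => μs j Set.univ - (μ Oᶜ + δ)) atTop
      (𝓝 (μ Set.univ - (μ Oᶜ + δ))) := by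
    apply ENNReal.Tendsto.sub huniv tendsto_const_nhds
    left; exact measure_ne_top μ _
  -- take liminf
  have hlim1 : μ Set.univ - (μ Oᶜ + δ) ≤ liminf (fun j => μs j E + δ) atTop := by
    rw [← htendsub.liminf_eq]
    exact liminf_le_liminf hev2
  have hlim2 : liminf (fun j => μs j E + δ) atTop = liminf (fun j => μs j E) atTop + δ :=
    liminf_add_const atTop (fun j => μs j E) δ (by isBoundedDefault) (by isBoundedDefault)
  -- identify μ univ - μ Oᶜ with μ O
  have hOuniv : μ O ≤ μ Set.univ - (μ Oᶜ + δ) + δ := by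
    have hsplit : μ O + μ Oᶜ = μ Set.univ := measure_add_measure_compl hO.measurableSet
    have : μ Set.univ - (μ Oᶜ + δ) + δ = μ Set.univ - μ Oᶜ - δ + δ := by
      rw [← tsub_tsub]
    rw [this]
    have h1 : μ O - δ ≤ μ Set.univ - μ Oᶜ - δ := by
      apply tsub_le_tsub_right
      rw [← hsplit]
      exact (ENNReal.add_sub_cancel_right (measure_ne_top μ _)).ge
    calc μ O ≤ μ O - δ + δ := le_tsub_add
      _ ≤ μ Set.univ - μ Oᶜ - δ + δ := add_le_add_left h1 _
  -- conclude
  have hEfin : μ E ≤ μ O + δ :=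
    (measure_mono hEO).trans ((measure_union_le _ _).trans (add_le_add_right hμG _))
  calc μ E ≤ μ O + δ := hEfin
    _ ≤ (μ Set.univ - (μ Oᶜ + δ) + δ) + δ := add_le_add_left hOuniv _
    _ ≤ (liminf (fun j => μs j E + δ) atTop + δ) + δ := by
        exact add_le_add_left (add_le_add_left hlim1 _) _
    _ = liminf (fun j => μs j E) atTop + (δ + δ + δ) := by
        rw [hlim2]; ring
    _ = liminf (fun j => μs j E) atTop + ε := by rw [hδε]
end

section
/- Let M be a compact metric space, let μ and μ_j (j ∈ ℕ) be finite Borel measures on M, and assume μ_j → μ weakly, i.e. ∫ f dμ_j → ∫ f dμ for every bounded continuous f : M → ℝ. Let E ⊆ M be a Borel set which is 'quasi-compact with uniformly small exceptional sets' in the following sense: for every ε > 0 there exist a compact set K ⊆ M and Borel sets G, G' ⊆ M with E ⊆ K ∪ G, K ⊆ E ∪ G', μ_j(G) ≤ ε for every j, and μ(G') ≤ ε. Then limsup_{j→∞} μ_j(E) ≤ μ(E). -/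
open Filter Topology MeasureTheory
open scoped ENNReal NNReal

/-- **Portmanteau inequality for quasi-compact sets.** If finite Borel measures `μ j`
converge weakly to `μ` on a compact metric space, and `E` is quasi-compact with
uniformly small exceptional sets, then `limsup_j (μ j) E ≤ μ E`. -/
theorem limsup_le_measure_of_quasiCompact {M : Type*} [MetricSpace M] [CompactSpace M]
    [MeasurableSpace M] [BorelSpace M]
    (μ : Measure M) (μs : ℕ → Measure M)
    [IsFiniteMeasure μ] [∀ j, IsFiniteMeasure (μs j)]
    (hweak : ∀ f : BoundedContinuousFunction M ℝ,
      Tendsto (fun j => ∫ x, f x ∂(μs j)) atTop (𝓝 (∫ x, f x ∂μ)))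
    (E : Set M) (hE : MeasurableSet E)
    (hquasi : ∀ ε : ℝ, 0 < ε → ∃ K G G' : Set M,
      IsCompact K ∧ MeasurableSet G ∧ MeasurableSet G' ∧
      E ⊆ K ∪ G ∧ K ⊆ E ∪ G' ∧
      (∀ j, μs j G ≤ ENNReal.ofReal ε) ∧ μ G' ≤ ENNReal.ofReal ε) :
    limsup (fun j => μs j E) atTop ≤ μ E := by
  -- weak convergence as FiniteMeasure convergence
  set P : ℕ → FiniteMeasure M := fun j => ⟨μs j, inferInstance⟩ with hP
  set Q : FiniteMeasure M := ⟨μ, inferInstance⟩ with hQ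
  have hFM : Tendsto P atTop (𝓝 Q) :=
    FiniteMeasure.tendsto_iff_forall_integral_tendsto.mpr hweak
  apply ENNReal.le_of_forall_pos_le_add
  intro δ δpos _
  obtain ⟨K, G, G', hK, hG, hG', hEKG, hKEG', hmuG, hmuG'⟩ :=
    hquasi ((δ : ℝ) / 2) (by positivity)
  have hclosed : IsClosed K := hK.isClosed
  have key : limsup (fun j => μs j K) atTop ≤ μ K :=
    FiniteMeasure.limsup_measure_closed_le_of_tendsto hFM hclosed
  have half : ENNReal.ofReal ((δ : ℝ) / 2) = (δ : ℝ≥0∞) / 2 := by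
    rw [ENNReal.ofReal_div_of_pos (by norm_num), ENNReal.ofReal_coe_nnreal]
    norm_num
  have step1 : ∀ j, μs j E ≤ μs j K + (δ : ℝ≥0∞) / 2 := fun j => by
    calc μs j E ≤ μs j (K ∪ G) := measure_mono hEKG
    _ ≤ μs j K + μs j G := measure_union_le _ _
    _ ≤ μs j K + (δ : ℝ≥0∞) / 2 := by
        exact add_le_add le_rfl (half ▸ hmuG j)
  have step2 : μ K ≤ μ E + (δ : ℝ≥0∞) / 2 := by
    calc μ K ≤ μ (E ∪ G') := measure_mono hKEG'
    _ ≤ μ E + μ G' := measure_union_le _ _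
    _ ≤ μ E + (δ : ℝ≥0∞) / 2 := add_le_add le_rfl (half ▸ hmuG')
  calc limsup (fun j => μs j E) atTop
      ≤ limsup (fun j => μs j K + (δ : ℝ≥0∞) / 2) atTop :=
        limsup_le_limsup (Eventually.of_forall step1)
    _ = limsup (fun j => μs j K) atTop + (δ : ℝ≥0∞) / 2 :=
        limsup_add_const atTop (fun j => μs j K) _ (by isBoundedDefault) (by isBoundedDefault)
    _ ≤ μ K + (δ : ℝ≥0∞) / 2 := add_le_add key le_rfl
    _ ≤ (μ E + (δ : ℝ≥0∞) / 2) + (δ : ℝ≥0∞) / 2 := add_le_add step2 le_rfl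
    _ = μ E + δ := by rw [add_assoc, ENNReal.add_halves]
end

section
/- Let M be a compact metric space. Let u, v : M → ℝ be bounded upper semicontinuous functions, and let (u_k)_{k∈ℕ} and (v_j)_{j∈ℕ} be sequences of continuous real-valued functions on M such that for every x ∈ M, (u_k(x)) is antitone with pointwise limit u(x) and (v_j(x)) is antitone with pointwise limit v(x). Let (μ_k), (ν_j), μ, ν be finite Borel measures on M with μ_k → μ and ν_j → ν weakly. Assume: (i) there is a constant C such that for every ε with 0 < ε < 1 there exist a Borel set G ⊆ M and continuous functions U, V : M → ℝ with u = U and v = V on M \ G, and μ(G) ≤ Cε, ν(G) ≤ Cε, μ_k(G) ≤ Cε and ν_k(G) ≤ Cε for every k; (ii) for every k there exists J_k such that for all j ≥ J_k, ν_j({x ∈ M : u_k(x) < v_j(x)}) ≤ μ_k({x ∈ M : u_k(x) < v_j(x)}). Then ν({x ∈ M : u(x) < v(x)}) ≤ μ({x ∈ M : u(x) ≤ v(x)}). -/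
open Filter Topology MeasureTheory Set
open scoped ENNReal NNReal

section AuxPortmanteau

variable {M : Type*} [MetricSpace M] [MeasurableSpace M] [BorelSpace M]

lemma aux_weak_tendsto (νj : ℕ → Measure M) (ν : Measure M)
    [∀ j, IsFiniteMeasure (νj j)] [IsFiniteMeasure ν]
    (hw : ∀ f : BoundedContinuousFunction M ℝ,
      Tendsto (fun j => ∫ x, f x ∂(νj j)) atTop (𝓝 (∫ x, f x ∂ν))) :
    @Tendsto ℕ (FiniteMeasure M) (fun j => ⟨νj j, inferInstance⟩) atTop
      (@nhds (FiniteMeasure M) FiniteMeasure.instTopologicalSpace ⟨ν, inferInstance⟩) :=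
  FiniteMeasure.tendsto_iff_forall_integral_tendsto.mpr hw

lemma aux_limsup_closed (νj : ℕ → Measure M) (ν : Measure M)
    [∀ j, IsFiniteMeasure (νj j)] [IsFiniteMeasure ν]
    (hw : ∀ f : BoundedContinuousFunction M ℝ,
      Tendsto (fun j => ∫ x, f x ∂(νj j)) atTop (𝓝 (∫ x, f x ∂ν)))
    {F : Set M} (hF : IsClosed F) :
    atTop.limsup (fun j => νj j F) ≤ ν F :=
  FiniteMeasure.limsup_measure_closed_le_of_tendsto (aux_weak_tendsto νj ν hw) hF

lemma aux_le_liminf_open (νj : ℕ → Measure M) (ν : Measure M)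
    [∀ j, IsFiniteMeasure (νj j)] [IsFiniteMeasure ν]
    (hw : ∀ f : BoundedContinuousFunction M ℝ,
      Tendsto (fun j => ∫ x, f x ∂(νj j)) atTop (𝓝 (∫ x, f x ∂ν)))
    {G : Set M} (hG : IsOpen G) :
    ν G ≤ atTop.liminf (fun j => νj j G) := by
  have hclosed : atTop.limsup (fun j => νj j Gᶜ) ≤ ν Gᶜ :=
    aux_limsup_closed νj ν hw hG.isClosed_compl
  have hmass : Tendsto (fun j => νj j univ) atTop (𝓝 (ν univ)) := by
    have h1 := (aux_weak_tendsto νj ν hw).mass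
    have h2 := (ENNReal.continuous_coe.tendsto _).comp h1
    rw [Function.comp_def] at h2
    convert h2 using 2 <;> exact (FiniteMeasure.ennreal_mass (Ω := M) (μ := ⟨_, inferInstance⟩)).symm
  rcases eq_or_ne (ν univ) 0 with h0 | h0
  · have : ν G = 0 := measure_mono_null (subset_univ G) h0
    simp [this]
  apply ENNReal.le_of_forall_pos_le_add
  intro ε hε _
  have hε2 : ((ε : ℝ≥0∞) / 2) ≠ 0 := by
    simp [ENNReal.div_eq_zero_iff, (ENNReal.coe_pos.mpr hε).ne']
  have h1 : ∀ᶠ j in atTop, νj j Gᶜ < ν Gᶜ + (ε : ℝ≥0∞) / 2 :=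
    Filter.eventually_lt_of_limsup_lt
      (lt_of_le_of_lt hclosed
        (ENNReal.lt_add_right (measure_ne_top ν Gᶜ) hε2))
  have h2 : ∀ᶠ j in atTop, ν univ - (ε : ℝ≥0∞) / 2 < νj j univ :=
    hmass.eventually_const_lt
      (ENNReal.sub_lt_self (measure_ne_top ν univ) h0 hε2)
  have hG' : ν G = ν univ - ν Gᶜ := by
    have := measure_compl (MeasurableSet.compl hG.measurableSet) (measure_ne_top ν Gᶜ)
    rwa [compl_compl] at this
  have key : ∀ᶠ j in atTop, ν G - (ε : ℝ≥0∞) ≤ νj j G := by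
    filter_upwards [h1, h2] with j hj1 hj2
    have e1 : νj j univ - νj j Gᶜ ≤ νj j G := by
      rw [tsub_le_iff_right]
      calc νj j univ = νj j (G ∪ Gᶜ) := by rw [union_compl_self]
        _ ≤ νj j G + νj j Gᶜ := measure_union_le _ _
    have e2 : (ν univ - (ε : ℝ≥0∞) / 2) - (ν Gᶜ + (ε : ℝ≥0∞) / 2)
        ≤ νj j univ - νj j Gᶜ := tsub_le_tsub hj2.le hj1.le
    have e3 : ν G - (ε : ℝ≥0∞)
        = (ν univ - (ε : ℝ≥0∞) / 2) - (ν Gᶜ + (ε : ℝ≥0∞) / 2) := by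
      rw [hG', tsub_tsub, tsub_tsub]
      congr 1
      rw [add_comm ((ε : ℝ≥0∞) / 2), add_assoc, ENNReal.add_halves]
    rw [e3]
    exact e2.trans e1
  have hlim : ν G - (ε : ℝ≥0∞) ≤ atTop.liminf (fun j => νj j G) :=
    le_liminf_of_le (by isBoundedDefault) key
  calc ν G ≤ (ν G - (ε : ℝ≥0∞)) + ε := le_tsub_add
    _ ≤ atTop.liminf (fun j => νj j G) + ε := add_le_add_left hlim _

end AuxPortmanteau

/-- **Measure-theoretic axiomatization of the Bedford–Taylor limiting process
(Lemma 7 of the paper).** -/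
theorem comparison_limit_lemma {M : Type*} [MetricSpace M] [CompactSpace M]
    [MeasurableSpace M] [BorelSpace M]
    (u v : M → ℝ) (uk vj : ℕ → M → ℝ)
    (hu_bdd : ∃ C : ℝ, ∀ x, |u x| ≤ C) (hv_bdd : ∃ C : ℝ, ∀ x, |v x| ≤ C)
    (hu_usc : UpperSemicontinuous u) (hv_usc : UpperSemicontinuous v)
    (huk_cont : ∀ k, Continuous (uk k)) (hvj_cont : ∀ j, Continuous (vj j))
    (huk_anti : ∀ x, Antitone fun k => uk k x)
    (hvj_anti : ∀ x, Antitone fun j => vj j x)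
    (huk_lim : ∀ x, Tendsto (fun k => uk k x) atTop (𝓝 (u x)))
    (hvj_lim : ∀ x, Tendsto (fun j => vj j x) atTop (𝓝 (v x)))
    (μk νj : ℕ → Measure M) (μ ν : Measure M)
    [∀ k, IsFiniteMeasure (μk k)] [∀ j, IsFiniteMeasure (νj j)]
    [IsFiniteMeasure μ] [IsFiniteMeasure ν]
    (hμweak : ∀ f : BoundedContinuousFunction M ℝ,
      Tendsto (fun k => ∫ x, f x ∂(μk k)) atTop (𝓝 (∫ x, f x ∂μ)))
    (hνweak : ∀ f : BoundedContinuousFunction M ℝ,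
      Tendsto (fun j => ∫ x, f x ∂(νj j)) atTop (𝓝 (∫ x, f x ∂ν)))
    (hcap : ∃ C : ℝ, ∀ ε : ℝ, 0 < ε → ε < 1 →
      ∃ (G : Set M) (U V : M → ℝ), MeasurableSet G ∧
        Continuous U ∧ Continuous V ∧
        (∀ x ∉ G, u x = U x) ∧ (∀ x ∉ G, v x = V x) ∧
        μ G ≤ ENNReal.ofReal (C * ε) ∧ ν G ≤ ENNReal.ofReal (C * ε) ∧
        (∀ k, μk k G ≤ ENNReal.ofReal (C * ε)) ∧
        (∀ k, νj k G ≤ ENNReal.ofReal (C * ε)))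
    (hcomp : ∀ k, ∃ J : ℕ, ∀ j ≥ J,
      νj j {x | uk k x < vj j x} ≤ μk k {x | uk k x < vj j x}) :
    ν {x | u x < v x} ≤ μ {x | u x ≤ v x} := by
  classical
  obtain ⟨C, hC⟩ := hcap
  have hu_le_uk : ∀ k x, u x ≤ uk k x := fun k x =>
    le_of_tendsto (huk_lim x)
      (eventually_atTop.mpr ⟨k, fun k' hk' => huk_anti x hk'⟩)
  have hv_le_vj : ∀ j x, v x ≤ vj j x := fun j x =>
    le_of_tendsto (hvj_lim x)
      (eventually_atTop.mpr ⟨j, fun j' hj' => hvj_anti x hj'⟩)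
  have main : ∀ ε : ℝ, 0 < ε → ε < 1 →
      ν {x | u x < v x} ≤ μ {x | u x ≤ v x} + 4 * ENNReal.ofReal (C * ε) := by
    intro ε hε0 hε1
    obtain ⟨G, U, V, hGm, hU, hV, huU, hvV, hμG, hνG, hμkG, hνjG⟩ := hC ε hε0 hε1
    set cε := ENNReal.ofReal (C * ε) with hcε
    set F := {x | U x ≤ V x} with hFdef
    have hFclosed : IsClosed F := isClosed_le hU hV
    -- per-k bound
    have Hk : ∀ k, ν {x | uk k x < v x} ≤ μk k F + (cε + cε + cε) := by
      intro k
      set O := {x | uk k x < V x} with hOdef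
      have hOopen : IsOpen O := isOpen_lt (huk_cont k) hV
      set E := fun j => {x | uk k x < vj j x} with hEdef
      have hEopen : ∀ j, IsOpen (E j) := fun j => isOpen_lt (huk_cont k) (hvj_cont j)
      have hEanti : Antitone E := fun j j' hjj' x hx =>
        lt_of_lt_of_le hx (hvj_anti x hjj')
      have step1 : ν {x | uk k x < v x} ≤ ν O + cε := by
        have hincl : {x | uk k x < v x} ⊆ O ∪ G := by
          intro x hx
          by_cases hxG : x ∈ G
          · exact Or.inr hxG
          · exact Or.inl (by simpa [hOdef, ← hvV x hxG] using hx)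
        calc ν {x | uk k x < v x} ≤ ν (O ∪ G) := measure_mono hincl
          _ ≤ ν O + ν G := measure_union_le _ _
          _ ≤ ν O + cε := add_le_add_right hνG _
      have step2 : ν O ≤ atTop.liminf (fun j => νj j O) :=
        aux_le_liminf_open νj ν hνweak hOopen
      obtain ⟨J, hJ⟩ := hcomp k
      have step3 : ∀ᶠ j in atTop, νj j O ≤ μk k (E j) + cε := by
        filter_upwards [eventually_ge_atTop J] with j hj
        have hincl : O ⊆ E j ∪ G := by
          intro x hx
          by_cases hxG : x ∈ G
          · exact Or.inr hxG
          · refine Or.inl ?_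
            have : uk k x < V x := hx
            rw [← hvV x hxG] at this
            exact lt_of_lt_of_le this (hv_le_vj j x)
        calc νj j O ≤ νj j (E j ∪ G) := measure_mono hincl
          _ ≤ νj j (E j) + νj j G := measure_union_le _ _
          _ ≤ μk k (E j) + cε := add_le_add (hJ j hj) (hνjG j)
      have step4 : Tendsto (fun j => μk k (E j) + cε) atTop
          (𝓝 (μk k (⋂ j, E j) + cε)) := by
        have := tendsto_measure_iInter_atTop (μ := μk k)
          (fun j => (hEopen j).measurableSet.nullMeasurableSet) hEanti
          ⟨0, measure_ne_top _ _⟩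
        exact this.add tendsto_const_nhds
      have step5 : atTop.liminf (fun j => νj j O) ≤ μk k (⋂ j, E j) + cε := by
        calc atTop.liminf (fun j => νj j O)
            ≤ atTop.liminf (fun j => μk k (E j) + cε) := liminf_le_liminf step3
          _ = μk k (⋂ j, E j) + cε := step4.liminf_eq
      have step6 : μk k (⋂ j, E j) ≤ μk k F + cε := by
        have hincl : (⋂ j, E j) ⊆ F ∪ G := by
          intro x hx
          by_cases hxG : x ∈ G
          · exact Or.inr hxG
          · refine Or.inl ?_
            have h1 : uk k x ≤ v x :=
              ge_of_tendsto (hvj_lim x)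
                (Eventually.of_forall fun j => (mem_iInter.mp hx j).le)
            have : U x ≤ V x := by
              rw [← huU x hxG, ← hvV x hxG]
              exact (hu_le_uk k x).trans h1
            exact this
        calc μk k (⋂ j, E j) ≤ μk k (F ∪ G) := measure_mono hincl
          _ ≤ μk k F + μk k G := measure_union_le _ _
          _ ≤ μk k F + cε := add_le_add_right (hμkG k) _
      calc ν {x | uk k x < v x} ≤ ν O + cε := step1
        _ ≤ (μk k (⋂ j, E j) + cε) + cε :=
            add_le_add_left (step2.trans step5) _
        _ ≤ ((μk k F + cε) + cε) + cε := by
            exact add_le_add_left (add_le_add_left step6 _) _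
        _ = μk k F + (cε + cε + cε) := by ring
    -- pass to the limit in k
    have hmono : Monotone (fun k => {x | uk k x < v x}) := by
      intro k k' hkk' x hx
      exact lt_of_le_of_lt (huk_anti x hkk') hx
    have hUnion : (⋃ k, {x | uk k x < v x}) = {x | u x < v x} := by
      ext x
      simp only [mem_iUnion, mem_setOf_eq]
      constructor
      · rintro ⟨k, hk⟩
        exact lt_of_le_of_lt (hu_le_uk k x) hk
      · intro hx
        exact ((huk_lim x).eventually_lt_const hx).exists
    have hνlim : Tendsto (fun k => ν {x | uk k x < v x}) atTop
        (𝓝 (ν {x | u x < v x})) := by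
      have := tendsto_measure_iUnion_atTop (μ := ν) hmono
      rw [hUnion] at this
      exact this
    have key : ∀ k0, ν {x | uk k0 x < v x} ≤ μ F + (cε + cε + cε) := by
      intro k0
      have hev : ∀ᶠ k in atTop,
          ν {x | uk k0 x < v x} - (cε + cε + cε) ≤ μk k F := by
        filter_upwards [eventually_ge_atTop k0] with k hk
        have hle : ν {x | uk k0 x < v x} ≤ μk k F + (cε + cε + cε) :=
          le_trans (measure_mono (hmono hk)) (Hk k)
        exact tsub_le_iff_right.mpr hle
      have h1 : ν {x | uk k0 x < v x} - (cε + cε + cε)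
          ≤ atTop.liminf (fun k => μk k F) :=
        le_liminf_of_le (by isBoundedDefault) hev
      have h2 : atTop.liminf (fun k => μk k F)
          ≤ atTop.limsup (fun k => μk k F) := liminf_le_limsup
      have h3 : atTop.limsup (fun k => μk k F) ≤ μ F :=
        aux_limsup_closed μk μ hμweak hFclosed
      calc ν {x | uk k0 x < v x}
          ≤ (ν {x | uk k0 x < v x} - (cε + cε + cε)) + (cε + cε + cε) :=
            le_tsub_add
        _ ≤ μ F + (cε + cε + cε) :=
            add_le_add_left (h1.trans (h2.trans h3)) _
    have hlim2 : ν {x | u x < v x} ≤ μ F + (cε + cε + cε) :=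
      le_of_tendsto hνlim (Eventually.of_forall key)
    have hFsub : μ F ≤ μ {x | u x ≤ v x} + cε := by
      have hincl : F ⊆ {x | u x ≤ v x} ∪ G := by
        intro x hx
        by_cases hxG : x ∈ G
        · exact Or.inr hxG
        · refine Or.inl ?_
          have : U x ≤ V x := hx
          rw [← huU x hxG, ← hvV x hxG] at this
          exact this
      calc μ F ≤ μ ({x | u x ≤ v x} ∪ G) := measure_mono hincl
        _ ≤ μ {x | u x ≤ v x} + μ G := measure_union_le _ _
        _ ≤ μ {x | u x ≤ v x} + cε := add_le_add_right hμG _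
    calc ν {x | u x < v x} ≤ μ F + (cε + cε + cε) := hlim2
      _ ≤ (μ {x | u x ≤ v x} + cε) + (cε + cε + cε) :=
          add_le_add_left hFsub _
      _ = μ {x | u x ≤ v x} + 4 * cε := by ring
  -- conclude by letting ε → 0
  apply ENNReal.le_of_forall_pos_le_add
  intro δ hδ _
  set D := max C 1 with hDdef
  have hD : 0 < D := lt_of_lt_of_le one_pos (le_max_right _ _)
  set ε := min ((1 : ℝ) / 2) ((δ : ℝ) / (4 * D)) with hεdef
  have hδR : (0 : ℝ) < (δ : ℝ) := by exact_mod_cast hδ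
  have hε0 : 0 < ε := lt_min (by norm_num) (div_pos hδR (by positivity))
  have hε1 : ε < 1 := lt_of_le_of_lt (min_le_left _ _) (by norm_num)
  have hbound : 4 * ENNReal.ofReal (C * ε) ≤ (δ : ℝ≥0∞) := by
    have h1 : C * ε ≤ (δ : ℝ) / 4 := by
      calc C * ε ≤ D * ε := mul_le_mul_of_nonneg_right (le_max_left _ _) hε0.le
        _ ≤ D * ((δ : ℝ) / (4 * D)) :=
            mul_le_mul_of_nonneg_left (min_le_right _ _) hD.le
        _ = (δ : ℝ) / 4 := by field_simp
    calc 4 * ENNReal.ofReal (C * ε)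
        ≤ 4 * ENNReal.ofReal ((δ : ℝ) / 4) := by
          exact mul_le_mul_right (ENNReal.ofReal_le_ofReal h1) 4
      _ = ENNReal.ofReal (4 * ((δ : ℝ) / 4)) := by
          rw [ENNReal.ofReal_mul (by norm_num : (0:ℝ) ≤ 4)]
          norm_num
      _ = (δ : ℝ≥0∞) := by
          rw [show (4 : ℝ) * ((δ : ℝ) / 4) = (δ : ℝ) by ring]
          exact ENNReal.ofReal_coe_nnreal
  calc ν {x | u x < v x} ≤ μ {x | u x ≤ v x} + 4 * ENNReal.ofReal (C * ε) :=
        main ε hε0 hε1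
    _ ≤ μ {x | u x ≤ v x} + δ := add_le_add_right hbound _
end
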